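/- Let N ≥ 1, let a_1, …, a_N be pairwise distinct real numbers, and let z_1^0, z_2^0, z_3^0 ∈ ℝ. Define G : ℝ^N × ℝ^N → ℝ by G(p,q) = z_1^0 ∑_{j=1}^N p_j q_j + z_2^0 ∑_{j=1}^N p_j^2 + z_3^0 ∑_{j=1}^N q_j^2. Then for every j ∈ {1, …, N}, the standard Poisson bracket satisfies {F_j, G}(p,q) = 0 for all (p,q) ∈ ℝ^N × ℝ^N. Consequently the N functions F_1, …, F_{N−1}, G pairwise Poisson-commute with respect to the standard Poisson bracket on ℝ^{2N}. -/

import Mathlib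

open Finset

/-- Partial derivative `∂f/∂p_j` of a function on `ℝ^N × ℝ^N`. -/
noncomputable def pdP {N : ℕ} (f : (Fin N → ℝ) × (Fin N → ℝ) → ℝ) (j : Fin N)
    (x : (Fin N → ℝ) × (Fin N → ℝ)) : ℝ :=
  fderiv ℝ f x (Pi.single j 1, 0)

/-- Partial derivative `∂f/∂q_j` of a function on `ℝ^N × ℝ^N`. -/
noncomputable def pdQ {N : ℕ} (f : (Fin N → ℝ) × (Fin N → ℝ) → ℝ) (j : Fin N)
    (x : (Fin N → ℝ) × (Fin N → ℝ)) : ℝ :=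
  fderiv ℝ f x (0, Pi.single j 1)

/-- The standard Poisson bracket
`{f,g}(p,q) = ∑_j (∂f/∂p_j ∂g/∂q_j − ∂f/∂q_j ∂g/∂p_j)` on `ℝ^N × ℝ^N`. -/
noncomputable def stdPoisson {N : ℕ}
    (f g : (Fin N → ℝ) × (Fin N → ℝ) → ℝ)
    (x : (Fin N → ℝ) × (Fin N → ℝ)) : ℝ :=
  ∑ j, (pdP f j x * pdQ g j x - pdQ f j x * pdP g j x)

/-- The Gaudin function `F_j(p,q) = ∑_{k ≠ j} (p_k q_j − p_j q_k)^2/(a_k − a_j)`. -/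
noncomputable def gaudinF (N : ℕ) (a : Fin N → ℝ) (j : Fin N)
    (x : (Fin N → ℝ) × (Fin N → ℝ)) : ℝ :=
  ∑ k ∈ Finset.univ.erase j, (x.1 k * x.2 j - x.1 j * x.2 k) ^ 2 / (a k - a j)

/-- `G(p,q) = z₁⁰ ∑ p_j q_j + z₂⁰ ∑ p_j² + z₃⁰ ∑ q_j²`. -/
noncomputable def gaudinG (N : ℕ) (z₁ z₂ z₃ : ℝ)
    (x : (Fin N → ℝ) × (Fin N → ℝ)) : ℝ :=
  z₁ * ∑ j, x.1 j * x.2 j + z₂ * ∑ j, (x.1 j) ^ 2 + z₃ * ∑ j, (x.2 j) ^ 2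

namespace GaudinAux

variable {N : ℕ}

noncomputable def Pc (k : Fin N) : ((Fin N → ℝ) × (Fin N → ℝ)) →L[ℝ] ℝ :=
  (ContinuousLinearMap.proj k).comp (ContinuousLinearMap.fst ℝ (Fin N → ℝ) (Fin N → ℝ))

noncomputable def Qc (k : Fin N) : ((Fin N → ℝ) × (Fin N → ℝ)) →L[ℝ] ℝ :=
  (ContinuousLinearMap.proj k).comp (ContinuousLinearMap.snd ℝ (Fin N → ℝ) (Fin N → ℝ))

@[simp] lemma Pc_apply (k : Fin N) (v : (Fin N → ℝ) × (Fin N → ℝ)) : Pc k v = v.1 k := rfl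
@[simp] lemma Qc_apply (k : Fin N) (v : (Fin N → ℝ) × (Fin N → ℝ)) : Qc k v = v.2 k := rfl

lemma hasFDerivAt_P (k : Fin N) (x : (Fin N → ℝ) × (Fin N → ℝ)) :
    HasFDerivAt (fun y : (Fin N → ℝ) × (Fin N → ℝ) => y.1 k) (Pc k) x := (Pc k).hasFDerivAt

lemma hasFDerivAt_Q (k : Fin N) (x : (Fin N → ℝ) × (Fin N → ℝ)) :
    HasFDerivAt (fun y : (Fin N → ℝ) × (Fin N → ℝ) => y.2 k) (Qc k) x := (Qc k).hasFDerivAt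

lemma hasFDerivAt_w (k j : Fin N) (x : (Fin N → ℝ) × (Fin N → ℝ)) :
    HasFDerivAt (fun y : (Fin N → ℝ) × (Fin N → ℝ) => y.1 k * y.2 j - y.1 j * y.2 k)
      ((x.1 k • Qc j + x.2 j • Pc k) - (x.1 j • Qc k + x.2 k • Pc j)) x :=
  ((hasFDerivAt_P k x).mul (hasFDerivAt_Q j x)).sub ((hasFDerivAt_P j x).mul (hasFDerivAt_Q k x))

lemma fderiv_F_apply (a : Fin N → ℝ) (j : Fin N) (x v : (Fin N → ℝ) × (Fin N → ℝ)) :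
    fderiv ℝ (gaudinF N a j) x v = ∑ k ∈ Finset.univ.erase j,
      2 * (x.1 k * x.2 j - x.1 j * x.2 k) *
        (v.1 k * x.2 j + x.1 k * v.2 j - (v.1 j * x.2 k + x.1 j * v.2 k)) / (a k - a j) := by
  have hfun : gaudinF N a j = fun y : (Fin N → ℝ) × (Fin N → ℝ) =>
      ∑ k ∈ Finset.univ.erase j, (a k - a j)⁻¹ *
        ((y.1 k * y.2 j - y.1 j * y.2 k) * (y.1 k * y.2 j - y.1 j * y.2 k)) := by
    funext y
    unfold gaudinF
    exact Finset.sum_congr rfl fun k _ => by rw [div_eq_inv_mul, sq]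
  have h : HasFDerivAt (gaudinF N a j)
      (∑ k ∈ Finset.univ.erase j, (a k - a j)⁻¹ •
        (((x.1 k * x.2 j - x.1 j * x.2 k) •
            ((x.1 k • Qc j + x.2 j • Pc k) - (x.1 j • Qc k + x.2 k • Pc j))) +
         ((x.1 k * x.2 j - x.1 j * x.2 k) •
            ((x.1 k • Qc j + x.2 j • Pc k) - (x.1 j • Qc k + x.2 k • Pc j))))) x := by
    rw [hfun]
    exact HasFDerivAt.fun_sum fun k _ =>
      (((hasFDerivAt_w k j x).fun_mul (hasFDerivAt_w k j x)).const_mul _)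
  rw [h.fderiv]
  simp only [ContinuousLinearMap.coe_sum', Finset.sum_apply, ContinuousLinearMap.coe_smul',
    Pi.smul_apply, ContinuousLinearMap.add_apply, ContinuousLinearMap.sub_apply,
    ContinuousLinearMap.smul_apply, Pc_apply, Qc_apply, smul_eq_mul]
  exact Finset.sum_congr rfl fun k _ => by ring

lemma fderiv_G_apply (z₁ z₂ z₃ : ℝ) (x v : (Fin N → ℝ) × (Fin N → ℝ)) :
    fderiv ℝ (gaudinG N z₁ z₂ z₃) x v =
      z₁ * ∑ j, (v.1 j * x.2 j + x.1 j * v.2 j) +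
      z₂ * ∑ j, 2 * x.1 j * v.1 j + z₃ * ∑ j, 2 * x.2 j * v.2 j := by
  have hfun : gaudinG N z₁ z₂ z₃ = fun y : (Fin N → ℝ) × (Fin N → ℝ) =>
      z₁ * ∑ j, y.1 j * y.2 j + z₂ * ∑ j, y.1 j * y.1 j + z₃ * ∑ j, y.2 j * y.2 j := by
    funext y; unfold gaudinG; simp [sq]
  have h : HasFDerivAt (gaudinG N z₁ z₂ z₃)
      ((z₁ • ∑ j, (x.1 j • Qc j + x.2 j • Pc j)) +
       (z₂ • ∑ j, (x.1 j • Pc j + x.1 j • Pc j)) +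
       (z₃ • ∑ j, (x.2 j • Qc j + x.2 j • Qc j))) x := by
    rw [hfun]
    exact (((HasFDerivAt.fun_sum fun j _ => (hasFDerivAt_P j x).fun_mul (hasFDerivAt_Q j x)).const_mul z₁).fun_add
      ((HasFDerivAt.fun_sum fun j _ => (hasFDerivAt_P j x).fun_mul (hasFDerivAt_P j x)).const_mul z₂)).fun_add
      ((HasFDerivAt.fun_sum fun j _ => (hasFDerivAt_Q j x).fun_mul (hasFDerivAt_Q j x)).const_mul z₃)
  rw [h.fderiv]
  simp only [ContinuousLinearMap.add_apply, ContinuousLinearMap.coe_smul', Pi.smul_apply,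
    ContinuousLinearMap.coe_sum', Finset.sum_apply, ContinuousLinearMap.smul_apply,
    Pc_apply, Qc_apply, smul_eq_mul]
  have e1 : (∑ j, (x.1 j * v.2 j + x.2 j * v.1 j)) = ∑ j, (v.1 j * x.2 j + x.1 j * v.2 j) :=
    Finset.sum_congr rfl fun j _ => by ring
  have e2 : (∑ j, (x.1 j * v.1 j + x.1 j * v.1 j)) = ∑ j, 2 * x.1 j * v.1 j :=
    Finset.sum_congr rfl fun j _ => by ring
  have e3 : (∑ j, (x.2 j * v.2 j + x.2 j * v.2 j)) = ∑ j, 2 * x.2 j * v.2 j :=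
    Finset.sum_congr rfl fun j _ => by ring
  rw [e1, e2, e3]

/-! ### partial derivative formulas -/

lemma pdP_G (z₁ z₂ z₃ : ℝ) (i : Fin N) (x : (Fin N → ℝ) × (Fin N → ℝ)) :
    pdP (gaudinG N z₁ z₂ z₃) i x = z₁ * x.2 i + 2 * z₂ * x.1 i := by
  unfold pdP
  rw [fderiv_G_apply]
  simp [Pi.single_apply, ite_mul, mul_ite, Finset.sum_ite_eq']
  ring

lemma pdQ_G (z₁ z₂ z₃ : ℝ) (i : Fin N) (x : (Fin N → ℝ) × (Fin N → ℝ)) :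
    pdQ (gaudinG N z₁ z₂ z₃) i x = z₁ * x.1 i + 2 * z₃ * x.2 i := by
  unfold pdQ
  rw [fderiv_G_apply]
  simp [Pi.single_apply, ite_mul, mul_ite, Finset.sum_ite_eq']
  ring

lemma pdP_F (a : Fin N → ℝ) (j i : Fin N) (x : (Fin N → ℝ) × (Fin N → ℝ)) :
    pdP (gaudinF N a j) i x = ∑ k ∈ Finset.univ.erase j,
      2 * (x.1 k * x.2 j - x.1 j * x.2 k) *
        ((if k = i then (1:ℝ) else 0) * x.2 j - (if j = i then (1:ℝ) else 0) * x.2 k) / (a k - a j) := by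
  unfold pdP
  rw [fderiv_F_apply]
  exact Finset.sum_congr rfl fun k _ => by simp [Pi.single_apply]

lemma pdQ_F (a : Fin N → ℝ) (j i : Fin N) (x : (Fin N → ℝ) × (Fin N → ℝ)) :
    pdQ (gaudinF N a j) i x = ∑ k ∈ Finset.univ.erase j,
      2 * (x.1 k * x.2 j - x.1 j * x.2 k) *
        (x.1 k * (if j = i then (1:ℝ) else 0) - x.1 j * (if k = i then (1:ℝ) else 0)) / (a k - a j) := by
  unfold pdQ
  rw [fderiv_F_apply]
  exact Finset.sum_congr rfl fun k _ => by simp [Pi.single_apply]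

lemma pdP_F_ne (a : Fin N → ℝ) {j i : Fin N} (hij : i ≠ j) (x : (Fin N → ℝ) × (Fin N → ℝ)) :
    pdP (gaudinF N a j) i x =
      2 * (x.1 i * x.2 j - x.1 j * x.2 i) * x.2 j / (a i - a j) := by
  rw [pdP_F]
  rw [Finset.sum_eq_single_of_mem i (Finset.mem_erase.2 ⟨hij, Finset.mem_univ i⟩)]
  · simp [hij.symm]
  · intro k _ hki
    simp [hki, hij.symm]

lemma pdQ_F_ne (a : Fin N → ℝ) {j i : Fin N} (hij : i ≠ j) (x : (Fin N → ℝ) × (Fin N → ℝ)) :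
    pdQ (gaudinF N a j) i x =
      -(2 * (x.1 i * x.2 j - x.1 j * x.2 i) * x.1 j) / (a i - a j) := by
  rw [pdQ_F]
  rw [Finset.sum_eq_single_of_mem i (Finset.mem_erase.2 ⟨hij, Finset.mem_univ i⟩)]
  · simp [hij.symm]
  · intro k _ hki
    simp [hki, hij.symm]

lemma pdP_F_self (a : Fin N → ℝ) (j : Fin N) (x : (Fin N → ℝ) × (Fin N → ℝ)) :
    pdP (gaudinF N a j) j x = ∑ k ∈ Finset.univ.erase j,
      -(2 * (x.1 k * x.2 j - x.1 j * x.2 k) * x.2 k) / (a k - a j) := by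
  rw [pdP_F]
  refine Finset.sum_congr rfl fun k hk => ?_
  rw [if_neg (Finset.mem_erase.1 hk).1, if_pos rfl]
  ring

lemma pdQ_F_self (a : Fin N → ℝ) (j : Fin N) (x : (Fin N → ℝ) × (Fin N → ℝ)) :
    pdQ (gaudinF N a j) j x = ∑ k ∈ Finset.univ.erase j,
      2 * (x.1 k * x.2 j - x.1 j * x.2 k) * x.1 k / (a k - a j) := by
  rw [pdQ_F]
  refine Finset.sum_congr rfl fun k hk => ?_
  rw [if_neg (Finset.mem_erase.1 hk).1, if_pos rfl]
  ring


/-! ### brackets -/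

lemma bracketFG (a : Fin N → ℝ) (z₁ z₂ z₃ : ℝ) (j : Fin N)
    (x : (Fin N → ℝ) × (Fin N → ℝ)) :
    stdPoisson (gaudinF N a j) (gaudinG N z₁ z₂ z₃) x = 0 := by
  unfold stdPoisson
  rw [← Finset.add_sum_erase _ _ (Finset.mem_univ j)]
  have h1 : pdP (gaudinF N a j) j x * pdQ (gaudinG N z₁ z₂ z₃) j x
      - pdQ (gaudinF N a j) j x * pdP (gaudinG N z₁ z₂ z₃) j x
      = ∑ k ∈ Finset.univ.erase j,
        (-(2 * (x.1 k * x.2 j - x.1 j * x.2 k) * x.2 k) / (a k - a j) * (z₁ * x.1 j + 2 * z₃ * x.2 j)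
         - 2 * (x.1 k * x.2 j - x.1 j * x.2 k) * x.1 k / (a k - a j) * (z₁ * x.2 j + 2 * z₂ * x.1 j)) := by
    rw [pdP_F_self, pdQ_F_self, pdP_G, pdQ_G, Finset.sum_mul, Finset.sum_mul,
      ← Finset.sum_sub_distrib]
  have h2 : ∀ i ∈ Finset.univ.erase j,
      pdP (gaudinF N a j) i x * pdQ (gaudinG N z₁ z₂ z₃) i x
      - pdQ (gaudinF N a j) i x * pdP (gaudinG N z₁ z₂ z₃) i x
      = (2 * (x.1 i * x.2 j - x.1 j * x.2 i) * x.2 j / (a i - a j) * (z₁ * x.1 i + 2 * z₃ * x.2 i)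
         - -(2 * (x.1 i * x.2 j - x.1 j * x.2 i) * x.1 j) / (a i - a j) * (z₁ * x.2 i + 2 * z₂ * x.1 i)) := by
    intro i hi
    rw [pdP_F_ne a (Finset.mem_erase.1 hi).1, pdQ_F_ne a (Finset.mem_erase.1 hi).1, pdP_G, pdQ_G]
  rw [h1, Finset.sum_congr rfl h2, ← Finset.sum_add_distrib]
  exact Finset.sum_eq_zero fun k _ => by ring

lemma bracketFF (a : Fin N → ℝ) (ha : Function.Injective a) {j l : Fin N} (hjl : j ≠ l)
    (x : (Fin N → ℝ) × (Fin N → ℝ)) :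
    stdPoisson (gaudinF N a j) (gaudinF N a l) x = 0 := by
  have hlj : l ∈ Finset.univ.erase j := Finset.mem_erase.2 ⟨hjl.symm, Finset.mem_univ l⟩
  have hjl' : j ∈ Finset.univ.erase l := Finset.mem_erase.2 ⟨hjl, Finset.mem_univ j⟩
  unfold stdPoisson
  rw [← Finset.add_sum_erase _ _ (Finset.mem_univ j), ← Finset.add_sum_erase _ _ hlj]
  -- the i = j term, as a sum over (univ.erase j).erase l
  have h1 : pdP (gaudinF N a j) j x * pdQ (gaudinF N a l) j x
      - pdQ (gaudinF N a j) j x * pdP (gaudinF N a l) j x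
      = ∑ k ∈ (Finset.univ.erase j).erase l,
        (-(2 * (x.1 k * x.2 j - x.1 j * x.2 k) * x.2 k) / (a k - a j)
            * (-(2 * (x.1 j * x.2 l - x.1 l * x.2 j) * x.1 l) / (a j - a l))
         - 2 * (x.1 k * x.2 j - x.1 j * x.2 k) * x.1 k / (a k - a j)
            * (2 * (x.1 j * x.2 l - x.1 l * x.2 j) * x.2 l / (a j - a l))) := by
    rw [pdP_F_self, pdQ_F_self, pdP_F_ne a hjl, pdQ_F_ne a hjl, Finset.sum_mul, Finset.sum_mul,
      ← Finset.sum_sub_distrib, ← Finset.add_sum_erase _ _ hlj]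
    rw [show -(2 * (x.1 l * x.2 j - x.1 j * x.2 l) * x.2 l) / (a l - a j) *
        (-(2 * (x.1 j * x.2 l - x.1 l * x.2 j) * x.1 l) / (a j - a l)) -
      2 * (x.1 l * x.2 j - x.1 j * x.2 l) * x.1 l / (a l - a j) *
        (2 * (x.1 j * x.2 l - x.1 l * x.2 j) * x.2 l / (a j - a l)) = 0 from by ring, zero_add]
  -- the i = l term, as a sum over (univ.erase j).erase l
  have h2 : pdP (gaudinF N a j) l x * pdQ (gaudinF N a l) l x
      - pdQ (gaudinF N a j) l x * pdP (gaudinF N a l) l x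
      = ∑ k ∈ (Finset.univ.erase j).erase l,
        (2 * (x.1 l * x.2 j - x.1 j * x.2 l) * x.2 j / (a l - a j)
            * (2 * (x.1 k * x.2 l - x.1 l * x.2 k) * x.1 k / (a k - a l))
         - -(2 * (x.1 l * x.2 j - x.1 j * x.2 l) * x.1 j) / (a l - a j)
            * (-(2 * (x.1 k * x.2 l - x.1 l * x.2 k) * x.2 k) / (a k - a l))) := by
    rw [pdP_F_ne a hjl.symm, pdQ_F_ne a hjl.symm, pdP_F_self, pdQ_F_self, Finset.mul_sum,
      Finset.mul_sum, ← Finset.sum_sub_distrib, ← Finset.add_sum_erase _ _ hjl',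
      Finset.erase_right_comm]
    rw [show 2 * (x.1 l * x.2 j - x.1 j * x.2 l) * x.2 j / (a l - a j) *
          (2 * (x.1 j * x.2 l - x.1 l * x.2 j) * x.1 j / (a j - a l)) -
        -(2 * (x.1 l * x.2 j - x.1 j * x.2 l) * x.1 j) / (a l - a j) *
          (-(2 * (x.1 j * x.2 l - x.1 l * x.2 j) * x.2 j) / (a j - a l)) = 0 from by ring, zero_add]
  have h3 : ∀ i ∈ (Finset.univ.erase j).erase l,
      pdP (gaudinF N a j) i x * pdQ (gaudinF N a l) i x
      - pdQ (gaudinF N a j) i x * pdP (gaudinF N a l) i x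
      = (2 * (x.1 i * x.2 j - x.1 j * x.2 i) * x.2 j / (a i - a j)
            * (-(2 * (x.1 i * x.2 l - x.1 l * x.2 i) * x.1 l) / (a i - a l))
         - -(2 * (x.1 i * x.2 j - x.1 j * x.2 i) * x.1 j) / (a i - a j)
            * (2 * (x.1 i * x.2 l - x.1 l * x.2 i) * x.2 l / (a i - a l))) := by
    intro i hi
    have hil : i ≠ l := (Finset.mem_erase.1 hi).1
    have hij : i ≠ j := (Finset.mem_erase.1 (Finset.mem_erase.1 hi).2).1
    rw [pdP_F_ne a hij, pdQ_F_ne a hij, pdP_F_ne a hil, pdQ_F_ne a hil]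
  rw [h1, h2, Finset.sum_congr rfl h3, ← Finset.sum_add_distrib, ← Finset.sum_add_distrib]
  refine Finset.sum_eq_zero fun k hk => ?_
  have hkl : k ≠ l := (Finset.mem_erase.1 hk).1
  have hkj : k ≠ j := (Finset.mem_erase.1 (Finset.mem_erase.1 hk).2).1
  have d1 : a k - a j ≠ 0 := sub_ne_zero.2 fun h => hkj (ha h)
  have d2 : a k - a l ≠ 0 := sub_ne_zero.2 fun h => hkl (ha h)
  have d3 : a j - a l ≠ 0 := sub_ne_zero.2 fun h => hjl (ha h)
  have d4 : a l - a j ≠ 0 := sub_ne_zero.2 fun h => hjl.symm (ha h)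
  field_simp
  ring

lemma stdPoisson_self (f : (Fin N → ℝ) × (Fin N → ℝ) → ℝ) (x : (Fin N → ℝ) × (Fin N → ℝ)) :
    stdPoisson f f x = 0 :=
  Finset.sum_eq_zero fun i _ => by ring

lemma stdPoisson_skew (f g : (Fin N → ℝ) × (Fin N → ℝ) → ℝ)
    (x : (Fin N → ℝ) × (Fin N → ℝ)) (h : stdPoisson f g x = 0) : stdPoisson g f x = 0 := by
  have : stdPoisson g f x = - stdPoisson f g x := by
    unfold stdPoisson
    rw [← Finset.sum_neg_distrib]
    exact Finset.sum_congr rfl fun i _ => by ring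
  rw [this, h, neg_zero]

end GaudinAux

theorem stmt3 (N : ℕ) (hN : 1 ≤ N) (a : Fin N → ℝ) (ha : Function.Injective a)
    (z₁ z₂ z₃ : ℝ) :
    (∀ j : Fin N, ∀ x : (Fin N → ℝ) × (Fin N → ℝ),
        stdPoisson (gaudinF N a j) (gaudinG N z₁ z₂ z₃) x = 0)
    ∧ (∀ f ∈ insert (gaudinG N z₁ z₂ z₃)
          {f | ∃ j : Fin N, (j : ℕ) < N - 1 ∧ f = gaudinF N a j},
       ∀ g ∈ insert (gaudinG N z₁ z₂ z₃)
          {f | ∃ j : Fin N, (j : ℕ) < N - 1 ∧ f = gaudinF N a j},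
       ∀ x : (Fin N → ℝ) × (Fin N → ℝ), stdPoisson f g x = 0) := by
  constructor
  · intro j x
    exact GaudinAux.bracketFG a z₁ z₂ z₃ j x
  · intro f hf g hg x
    simp only [Set.mem_insert_iff, Set.mem_setOf_eq] at hf hg
    rcases hf with rfl | ⟨j, hj, rfl⟩
    · rcases hg with rfl | ⟨j, hj, rfl⟩
      · exact GaudinAux.stdPoisson_self _ x
      · exact GaudinAux.stdPoisson_skew _ _ x (GaudinAux.bracketFG a z₁ z₂ z₃ j x)
    · rcases hg with rfl | ⟨l, hl, rfl⟩
      · exact GaudinAux.bracketFG a z₁ z₂ z₃ j x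
      · rcases eq_or_ne j l with rfl | hjl
        · exact GaudinAux.stdPoisson_self _ x
        · exact GaudinAux.bracketFF a ha hjl x
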